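/- Let G be a path connected, locally path connected and semilocally simply connected topological group with identity 1. Then the fundamental groupoid Π₁(G) with the CO' topology is isomorphic, as a topological groupoid, to the transformation groupoid H ⋉ G, where H = {a ∈ Π₁(G) : s(a) = 1} is the universal covering group (group law induced by pointwise multiplication of paths starting at 1) acting on G through the covering homomorphism p : H → G, p([γ]) = γ(1). Concretely, the map J : H × G → Π₁(G), ([γ],g) ↦ [γ·g], is a homeomorphism and is multiplicative: for all paths η, γ in G with η(0) = γ(0) = 1 and all g ∈ G, setting h = γ(1)·g, the concatenation of the path γ·g followed by the path η·h is path-homotopic to the path t ↦ η(t)·γ(t)·g; i.e. J([η⊗γ], g) equals the composite [η·h] ⧠-composed with [γ·g] in Π₁(G). -/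

import Mathlib

open unitInterval

noncomputable section

variable {X : Type*} [TopologicalSpace X]

/-- The path-homotopy (homotopy relative to `{0,1}`) relation on `C(I, X)`. -/
def pRel (f g : C(I, X)) : Prop := f.HomotopicRel g {0, 1}

/-- The path-homotopy setoid on `C(I, X)`. -/
def pSetoid (X : Type*) [TopologicalSpace X] : Setoid C(I, X) :=
  ⟨pRel, ContinuousMap.HomotopicRel.equivalence⟩

/-- The fundamental groupoid `Π₁(X)` as the quotient of the path space `P(X) = C(I, X)`
(with the compact-open topology) by path homotopy; it carries the quotient (CO') topology. -/
abbrev Pi1 (X : Type*) [TopologicalSpace X] := Quotient (pSetoid X)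

/-- The quotient map `q : P(X) → Π₁(X)`. -/
def pq : C(I, X) → Pi1 X := Quotient.mk (pSetoid X)

theorem pRel.endpts {f g : C(I, X)} (h : pRel f g) {t : I} (ht : t ∈ ({0, 1} : Set I)) :
    f t = g t := h.some.fst_eq_snd ht

/-- The source map `s : Π₁(X) → X`, `[γ] ↦ γ(0)`. -/
def srcMap : Pi1 X → X :=
  Quotient.lift (fun f : C(I, X) => f 0) fun _ _ h =>
    pRel.endpts h (by simp)

/-- The range map `r : Π₁(X) → X`, `[γ] ↦ γ(1)`. -/
def rngMap : Pi1 X → X :=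
  Quotient.lift (fun f : C(I, X) => f 1) fun _ _ h =>
    pRel.endpts h (by simp)

/-- A continuous map `I → X` regarded as a `Path` between its endpoints. -/
def toPath (f : C(I, X)) : Path (f 0) (f 1) := ⟨f, rfl, rfl⟩

/-- Concatenation `α ⧠ β` of paths: traverse `β` first and then `α`
(given `β 1 = α 0`). -/
def concat (α β : C(I, X)) (h : β 1 = α 0) : C(I, X) :=
  ((toPath β).trans ((toPath α).cast h rfl)).toContinuousMap

@[simp] theorem concat_zero (α β : C(I, X)) (h : β 1 = α 0) : concat α β h 0 = β 0 :=
  ((toPath β).trans ((toPath α).cast h rfl)).source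

@[simp] theorem concat_one (α β : C(I, X)) (h : β 1 = α 0) : concat α β h 1 = α 1 :=
  ((toPath β).trans ((toPath α).cast h rfl)).target

/-- The set `N([γ], U, V) = {[δ ⧠ γ ⧠ θ] : δ a path in U with δ 0 = γ 1,
θ a path in V with θ 1 = γ 0}` in `Π₁(X)`. -/
def Nhd (a : Pi1 X) (U V : Set X) : Set (Pi1 X) :=
  { b | ∃ (γ δ θ : C(I, X)) (h₁ : θ 1 = γ 0) (h₂ : γ 1 = δ 0),
      pq γ = a ∧ Set.range δ ⊆ U ∧ Set.range θ ⊆ V ∧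
      b = pq (concat δ (concat γ θ h₁) ((concat_one γ θ h₁).trans h₂)) }

/-- A subset `U ⊆ X` is relatively inessential in `X` if every loop in `U` is
null-homotopic (path-homotopic to a constant path) in `X`. -/
def RelInessential (X : Type*) [TopologicalSpace X] (U : Set X) : Prop :=
  ∀ γ : C(I, X), Set.range γ ⊆ U → γ 1 = γ 0 →
    pRel γ (ContinuousMap.const I (γ 0))

/-- `X` is semilocally simply connected if every point has a relatively inessential
open neighbourhood. -/
def SemilocSimplyConnected (X : Type*) [TopologicalSpace X] : Prop :=
  ∀ x : X, ∃ U : Set X, IsOpen U ∧ x ∈ U ∧ RelInessential X U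



section AuxLemmas

theorem path_mk_apply {x y : X} (f : C(I, X)) (h0 : f 0 = x) (h1 : f 1 = y) (t : I) :
    (Path.mk f h0 h1 : Path x y) t = f t := rfl

theorem pRel.symm' {f g : C(I, X)} (h : pRel f g) : pRel g f :=
  ContinuousMap.HomotopicRel.symm h

theorem pRel_concat_const_left (γ : C(I, X)) (h : γ 1 = (ContinuousMap.const I (γ 1)) 0) :
    pRel (concat (ContinuousMap.const I (γ 1)) γ h) γ := by
  have e : (toPath (ContinuousMap.const I (γ 1))).cast h rfl = Path.refl (γ 1) := by
    ext t; rfl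
  show (((toPath γ).trans ((toPath (ContinuousMap.const I (γ 1))).cast h rfl)).toContinuousMap).HomotopicRel
    γ {0, 1}
  rw [e]
  exact ⟨Path.Homotopy.transRefl (toPath γ)⟩

theorem pRel_concat_const_right (η : C(I, X)) (h : (ContinuousMap.const I (η 0)) 1 = η 0) :
    pRel (concat η (ContinuousMap.const I (η 0)) h) η := by
  have e : toPath (ContinuousMap.const I (η 0)) = Path.refl (η 0) := by ext t; rfl
  show (((toPath (ContinuousMap.const I (η 0))).trans ((toPath η).cast h rfl)).toContinuousMap).HomotopicRel
    η {0, 1}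
  rw [e]
  exact ⟨(Path.Homotopy.reflTrans ((toPath η).cast h rfl)).cast rfl rfl⟩

variable {G : Type*} [TopologicalSpace G] [Group G] [IsTopologicalGroup G]

theorem pRel.mul' {f f' g g' : C(I, G)} (hf : pRel f f') (hg : pRel g g') :
    pRel (f * g) (f' * g') := by
  obtain ⟨F⟩ := hf
  obtain ⟨K⟩ := hg
  exact ⟨{ toFun := fun x => F x * K x
           continuous_toFun := F.continuous.mul K.continuous
           map_zero_left := fun x => by simp
           map_one_left := fun x => by simp
           prop' := fun t x hx => by
             simp [F.eq_fst t hx, K.eq_fst t hx] }⟩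

theorem pRel.refl' (f : C(I, G)) : pRel f f := ContinuousMap.HomotopicRel.refl f

theorem pq_isOpenMap : IsOpenMap (pq : C(I, G) → Pi1 G) := by
  intro W hW
  have : IsOpen ((pq : C(I, G) → Pi1 G) ⁻¹' (pq '' W)) := by
    rw [isOpen_iff_forall_mem_open]
    rintro γ' ⟨w, hwW, hww⟩
    have hww' : pRel γ' w := Quotient.exact hww.symm
    refine ⟨(fun α => α * (γ'⁻¹ * w)) ⁻¹' W, ?_, ?_, ?_⟩
    · rintro α (hα : α * (γ'⁻¹ * w) ∈ W)
      refine ⟨α * (γ'⁻¹ * w), hα, ?_⟩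
      apply Quotient.sound
      have : pRel (α * (γ'⁻¹ * γ')) (α * (γ'⁻¹ * w)) :=
        (pRel.refl' α).mul' ((pRel.refl' γ'⁻¹).mul' hww')
      exact (show pRel _ _ by simpa [inv_mul_cancel, mul_one] using this.symm')
    · exact hW.preimage (continuous_id.mul continuous_const)
    · show γ' * (γ'⁻¹ * w) ∈ W
      simpa [mul_inv_cancel_left] using hwW
  exact isQuotientMap_quotient_mk'.isOpen_preimage.mp this

theorem concat_eq_mul (η γ : C(I, G)) (g : G) (hη : η 0 = 1)
    (H : (γ * ContinuousMap.const I g) 1 = (η * ContinuousMap.const I (γ 1 * g)) 0) :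
    concat (η * ContinuousMap.const I (γ 1 * g)) (γ * ContinuousMap.const I g) H =
      concat η (ContinuousMap.const I (η 0)) rfl *
        concat (ContinuousMap.const I (γ 1)) γ rfl * ContinuousMap.const I g := by
  ext t
  simp only [concat, ContinuousMap.mul_apply, ContinuousMap.const_apply,
    Path.coe_toContinuousMap, Path.trans_apply, Path.cast_coe]
  split_ifs with h
  · rw [one_div] at h
    simp [toPath, path_mk_apply, hη, Path.trans_apply, h]
    rfl
  · rw [one_div] at h
    simp [toPath, path_mk_apply, mul_assoc, Path.trans_apply, h]
    rfl

/-- The action `Π₁(G) × G → Π₁(G)`, `([γ], g) ↦ [γ·g]`. -/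
def pact : Pi1 G × G → Pi1 G := fun p =>
  Quotient.lift (fun γ : C(I, G) => pq (γ * ContinuousMap.const I p.2))
    (fun _ _ h => Quotient.sound (pRel.mul' h (pRel.refl' _))) p.1

theorem pact_mk (γ : C(I, G)) (g : G) :
    pact (pq γ, g) = pq (γ * ContinuousMap.const I g) := rfl

theorem continuous_pact : Continuous (pact : Pi1 G × G → Pi1 G) := by
  have hq : Topology.IsQuotientMap (Prod.map (pq : C(I, G) → Pi1 G) (id : G → G)) := by
    refine (pq_isOpenMap.prodMap IsOpenMap.id).isQuotientMap
      (continuous_quotient_mk'.prodMap continuous_id) ?_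
    exact (Quotient.mk''_surjective.prodMap Function.surjective_id)
  rw [hq.continuous_iff]
  show Continuous fun p : C(I, G) × G => pq (p.1 * ContinuousMap.const I p.2)
  exact continuous_quotient_mk'.comp
    (continuous_fst.mul (ContinuousMap.continuous_const'.comp continuous_snd))

/-- Division by the source: `[γ] ↦ [γ · γ(0)⁻¹]`. -/
def psrcDiv : Pi1 G → Pi1 G :=
  Quotient.lift (fun γ : C(I, G) => pq (γ * ContinuousMap.const I (γ 0)⁻¹))
    (fun γ γ' h => by
      have h0 : γ 0 = γ' 0 := pRel.endpts h (by simp)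
      show pq (γ * ContinuousMap.const I (γ 0)⁻¹) = pq (γ' * ContinuousMap.const I (γ' 0)⁻¹)
      rw [h0]
      exact Quotient.sound (pRel.mul' h (pRel.refl' _)))

theorem continuous_psrcDiv : Continuous (psrcDiv : Pi1 G → Pi1 G) := by
  apply Continuous.quotient_lift
  exact continuous_quotient_mk'.comp
    (continuous_id.mul (ContinuousMap.continuous_const'.comp (continuous_eval_const 0).inv))

theorem srcMap_psrcDiv (b : Pi1 G) : srcMap (psrcDiv b) = 1 := by
  induction b using Quotient.ind with
  | _ γ => exact mul_inv_cancel (γ 0)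

theorem continuous_srcMap : Continuous (srcMap : Pi1 G → G) :=
  Continuous.quotient_lift (continuous_eval_const 0) _

end AuxLemmas

/-- For a path connected, locally path connected, semilocally simply connected
topological group `G`, the fundamental groupoid `Π₁(G)` is isomorphic as a topological
groupoid to the transformation groupoid `H ⋉ G`, where `H = {a ∈ Π₁(G) : s(a) = 1}` is the
universal covering group acting through `p([γ]) = γ(1)`. Concretely:
`J : H × G → Π₁(G)`, `([γ], g) ↦ [γ·g]`, is a homeomorphism, and it is multiplicative: for
paths `η, γ` starting at `1` and `g ∈ G`, with `h = γ(1)·g`, the concatenation traversing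
`γ·g` first and then `η·h` is path-homotopic to `t ↦ η(t)·γ(t)·g`, i.e.
`J([η ⊗ γ], g)` is the groupoid composite `[η·h] ∘ [γ·g]`. -/
theorem stmt14 {G : Type*} [TopologicalSpace G] [Group G] [IsTopologicalGroup G]
    [PathConnectedSpace G] [LocallyPathConnectedSpace G]
    (hG : SemilocSimplyConnected G) :
    ∃ e : ({ a : Pi1 G // srcMap a = 1 } × G) ≃ₜ Pi1 G,
      (∀ (γ : C(I, G)) (hγ : srcMap (pq γ) = 1) (g : G),
        e (⟨pq γ, hγ⟩, g) = pq (γ * ContinuousMap.const I g)) ∧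
      ∀ (η γ : C(I, G)) (hη : η 0 = 1) (hγ : γ 0 = 1) (g : G),
        e (⟨pq (η * γ), show (η * γ) 0 = 1 by simp [hη, hγ]⟩, g) =
          pq (concat (η * ContinuousMap.const I (γ 1 * g))
                (γ * ContinuousMap.const I g) (by simp [hη, mul_assoc])) := by
  classical
  refine ⟨{
      toFun := fun p => pact (p.1.1, p.2)
      invFun := fun b => (⟨psrcDiv b, srcMap_psrcDiv b⟩, srcMap b)
      left_inv := ?_
      right_inv := ?_
      continuous_toFun := continuous_pact.comp
        ((continuous_subtype_val.comp continuous_fst).prodMk continuous_snd)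
      continuous_invFun := (continuous_psrcDiv.subtype_mk _).prodMk continuous_srcMap
    }, ?_, ?_⟩
  · rintro ⟨⟨a, ha⟩, g⟩
    induction a using Quotient.ind with
    | _ γ =>
      have hγ0 : γ 0 = 1 := ha
      have hsrc : srcMap (pact (pq γ, g)) = g := by
        show γ 0 * g = g
        rw [hγ0, one_mul]
      refine Prod.ext ?_ ?_
      · apply Subtype.ext
        show psrcDiv (pq (γ * ContinuousMap.const I g)) = pq γ
        show pq ((γ * ContinuousMap.const I g) *
          ContinuousMap.const I ((γ * ContinuousMap.const I g) 0)⁻¹) = pq γ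
        congr 1
        ext t
        simp [hγ0, mul_assoc]
      · exact hsrc
  · intro b
    induction b using Quotient.ind with
    | _ γ =>
      show pq ((γ * ContinuousMap.const I (γ 0)⁻¹) *
        ContinuousMap.const I (srcMap (pq γ))) = pq γ
      congr 1
      ext t
      simp [mul_assoc]
      exact inv_mul_cancel (γ 0)
  · intro γ hγ g
    rfl
  · intro η γ hη γ0 g
    show pq ((η * γ) * ContinuousMap.const I g) = _
    apply Quotient.sound
    refine (congrArg (pRel _) (concat_eq_mul η γ g hη _)).mpr ?_
    show pRel ((η * γ) * ContinuousMap.const I g) _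
    exact (((pRel_concat_const_right η rfl).mul'
      (pRel_concat_const_left γ rfl)).mul' (pRel.refl' _)).symm'


end
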